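/- With the notation M_i = (ℝ ⊕ ℝ₊M) ∩ (ℤ(x₁ − ie) + ⋯ + ℤ(x_r − ie)) ⊆ ℤ^n for i ∈ ℤ₊ (where e = (1,0), n = r+1, and ℝ₊M ⊆ ℝ₊x₁ + ⋯ + ℝ₊x_r), the submonoids ℤ₊e + M_i of ℤ^n form an increasing chain: ℤ₊e + M₀ ⊆ ℤ₊e + M₁ ⊆ ℤ₊e + M₂ ⊆ ⋯. -/

import Mathlib

open scoped NNReal
noncomputable section

/-- Real image of an integer vector. -/
def toR {r : ℕ} (v : Fin r → ℤ) : Fin r → ℝ := fun i => (v i : ℝ)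

/-- The group of differences of a submonoid of an abelian group. -/
def gp {G : Type*} [AddCommGroup G] (M : AddSubmonoid G) : AddSubgroup G :=
  AddSubgroup.closure (M : Set G)

/-- `M` is normal: `c • x ∈ M` for `x ∈ gp M`, `c ≥ 1` implies `x ∈ M`. -/
def IsNormalMonoid {G : Type*} [AddCommGroup G] (M : AddSubmonoid G) : Prop :=
  ∀ (c : ℕ) (x : G), 0 < c → x ∈ gp M → (c : ℤ) • x ∈ M → x ∈ M

/-- `M` is positive: no nontrivial units. -/
def IsPositiveMonoid {G : Type*} [AddCommGroup G] (M : AddSubmonoid G) : Prop :=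
  ∀ x ∈ M, -x ∈ M → x = 0

/-- The cone `ℝ₊M ⊆ ℝ^r` spanned by a submonoid `M ⊆ ℤ^r`. -/
def coneM {r : ℕ} (M : AddSubmonoid (Fin r → ℤ)) : Set (Fin r → ℝ) :=
  (Submodule.span ℝ≥0 (toR '' (M : Set (Fin r → ℤ))) : Submodule ℝ≥0 (Fin r → ℝ))

/-- The distinguished vector `e = (1,0) ∈ ℤ ⊕ ℤ^r`. -/
def eVec (r : ℕ) : ℤ × (Fin r → ℤ) := (1, 0)

/-- `M_i = (ℝ ⊕ ℝ₊M) ∩ (ℤ(x₁ - ie) + ⋯ + ℤ(x_r - ie))`, with `x_j - ie = (-i, x_j)`. -/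
def Mi {r : ℕ} (M : AddSubmonoid (Fin r → ℤ)) (x : Fin r → (Fin r → ℤ)) (i : ℕ) :
    Set (ℤ × (Fin r → ℤ)) :=
  {p | p ∈ AddSubgroup.closure (Set.range fun j => ((-(i : ℤ), x j) : ℤ × (Fin r → ℤ))) ∧
       toR p.2 ∈ coneM M}

/-- The submonoid (as a set) `ℤ₊e + M_i`. -/
def ZeMi {r : ℕ} (M : AddSubmonoid (Fin r → ℤ)) (x : Fin r → (Fin r → ℤ)) (i : ℕ) :
    Set (ℤ × (Fin r → ℤ)) :=
  {p | ∃ (z : ℕ) (m : ℤ × (Fin r → ℤ)), m ∈ Mi M x i ∧ p = (z : ℤ) • eVec r + m}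
lemma mem_closure_range_iff {G : Type*} [AddCommGroup G] {r : ℕ} (g : Fin r → G) (m : G) :
    m ∈ AddSubgroup.closure (Set.range g) ↔ ∃ a : Fin r → ℤ, ∑ j, a j • g j = m := by
  rw [← Submodule.span_int_eq_addSubgroupClosure, Submodule.mem_toAddSubgroup,
    Submodule.mem_span_range_iff_exists_fun]

lemma li_toR {r : ℕ} (b : Module.Basis (Fin r) ℤ (Fin r → ℤ)) :
    LinearIndependent ℝ (fun j => toR (b j)) := by
  classical
  letI : Invertible ((Pi.basisFun ℤ (Fin r)).toMatrix ⇑b) :=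
    (Pi.basisFun ℤ (Fin r)).invertibleToMatrix b
  letI : Invertible (((Pi.basisFun ℤ (Fin r)).toMatrix ⇑b).map (Int.castRingHom ℝ)) :=
    Invertible.map ((Int.castRingHom ℝ).mapMatrix) _
  exact Matrix.linearIndependent_cols_iff_isUnit.2
    (isUnit_of_invertible (((Pi.basisFun ℤ (Fin r)).toMatrix ⇑b).map (Int.castRingHom ℝ)))

/-- the monoids ℤ₊e + M_i form an increasing chain. -/
theorem statement3 {r : ℕ} (M : AddSubmonoid (Fin r → ℤ))
    (hFG : M.FG) (hpos : IsPositiveMonoid M) (hnorm : IsNormalMonoid M) (hgp : gp M = ⊤)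
    (x : Fin r → (Fin r → ℤ)) (hx : ∃ b : Module.Basis (Fin r) ℤ (Fin r → ℤ), x = ⇑b)
    (hcone : coneM M ⊆
      (Submodule.span ℝ≥0 (Set.range fun j => toR (x j)) : Set (Fin r → ℝ))) :
    ∀ i : ℕ, ZeMi M x i ⊆ ZeMi M x (i + 1) := by
  obtain ⟨b, rfl⟩ := hx
  intro i p hp
  obtain ⟨z, m, ⟨hmcl, hmcone⟩, rfl⟩ := hp
  obtain ⟨a, ha⟩ := (mem_closure_range_iff _ m).1 hmcl
  set s : ℤ := ∑ j, a j with hs_def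
  have hm1 : m.1 = -(i : ℤ) * s := by
    rw [← ha, Prod.fst_sum]
    simp only [Prod.smul_fst, smul_eq_mul]
    rw [← Finset.sum_mul, mul_comm]
  have hm2 : m.2 = ∑ j, a j • b j := by
    rw [← ha, Prod.snd_sum]
    simp only [Prod.smul_snd]
  have htoR : toR m.2 = ∑ j, (a j : ℝ) • toR (b j) := by
    funext k
    simp only [toR, hm2, Finset.sum_apply, Pi.smul_apply, smul_eq_mul, zsmul_eq_mul]
    push_cast
    simp
  -- nonnegativity of the coefficients a
  obtain ⟨c, hc⟩ := Submodule.mem_span_range_iff_exists_fun ℝ≥0 |>.1 (hcone hmcone)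
  have hc' : ∑ j, ((c j : ℝ)) • toR (b j) = toR m.2 := by
    rw [← hc]
    congr 1
  have hzero : ∑ j, ((a j : ℝ) - (c j : ℝ)) • toR (b j) = 0 := by
    simp only [sub_smul, Finset.sum_sub_distrib]
    rw [← htoR, hc', sub_self]
  have hanneg : ∀ j, 0 ≤ a j := by
    intro j
    have h := Fintype.linearIndependent_iff.1 (li_toR b) _ hzero j
    have h2 : (a j : ℝ) = (c j : ℝ) := by linarith [sub_eq_zero.1 h]
    have : (0 : ℝ) ≤ (a j : ℝ) := h2 ▸ (c j).coe_nonneg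
    exact_mod_cast this
  have hs : 0 ≤ s := Finset.sum_nonneg fun j _ => hanneg j
  refine ⟨z + s.toNat, (-(((i : ℤ) + 1)) * s, m.2), ⟨?_, hmcone⟩, ?_⟩
  · rw [mem_closure_range_iff]
    refine ⟨a, ?_⟩
    rw [Prod.ext_iff]
    constructor
    · rw [Prod.fst_sum]
      simp only [Prod.smul_fst, smul_eq_mul]
      push_cast
      rw [← Finset.sum_mul, mul_comm]
    · rw [Prod.snd_sum]
      simp only [Prod.smul_snd]
      exact hm2.symm
  · have hts : (s.toNat : ℤ) = s := Int.toNat_of_nonneg hs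
    rw [Prod.ext_iff]
    constructor
    · simp only [eVec, Prod.smul_fst, Prod.fst_add, smul_eq_mul, mul_one]
      push_cast [hts]
      rw [hm1]; ring
    · simp [eVec]
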